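/- Let f, p be d×d matrix-valued trigonometric polynomials, n = 2k even, and define the block-circulant matrices 𝒜ₙ(g) = (Fₙ ⊗ I_d) diag_{i}(g(θ_i^{(n)})) (Fₙ^H ⊗ I_d) for θ_i^{(n)} = 2πi/n. With pₙᵏ := 𝒜ₙ(p)(Kₙ^T ⊗ I_d), where Kₙ is the even-index cutting matrix, the coarse matrix (pₙᵏ)^H 𝒜ₙ(f) pₙᵏ equals 𝒜_k(f̂) where f̂(θ) = ½ ( p(θ/2)^H f(θ/2) p(θ/2) + p(θ/2 + π)^H f(θ/2 + π) p(θ/2 + π) ). Moreover if f(θ) is positive semidefinite for all θ then so is f̂(θ). -/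

import Mathlib

open Matrix
open scoped ComplexOrder Kronecker

/-- The (unitary) Fourier matrix `Fₙ` with entries `n^{-1/2} e^{-ι j θ_i^{(n)}}`,
`θ_i^{(n)} = 2πi/n`. -/
noncomputable def Fmat (n : ℕ) : Matrix (Fin n) (Fin n) ℂ :=
  Matrix.of fun i j =>
    ((Real.sqrt n : ℝ) : ℂ)⁻¹ *
      Complex.exp (-Complex.I * ((j : ℕ) : ℂ) *
        ((2 * Real.pi * (i : ℕ) / n : ℝ) : ℂ))

/-- Block-diagonal matrix of the samples `g(θ_i^{(n)})`, `θ_i^{(n)} = 2πi/n`. -/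
noncomputable def sampDiag (n d : ℕ) (g : ℝ → Matrix (Fin d) (Fin d) ℂ) :
    Matrix (Fin n × Fin d) (Fin n × Fin d) ℂ :=
  Matrix.of fun p q =>
    if p.1 = q.1 then g (2 * Real.pi * (p.1 : ℕ) / n) p.2 q.2 else 0

/-- The block-circulant matrix `𝒜ₙ(g) = (Fₙ ⊗ I_d) diag_i(g(θ_i^{(n)})) (Fₙᴴ ⊗ I_d)`. -/
noncomputable def blockCirc (n d : ℕ) (g : ℝ → Matrix (Fin d) (Fin d) ℂ) :
    Matrix (Fin n × Fin d) (Fin n × Fin d) ℂ :=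
  (Fmat n ⊗ₖ (1 : Matrix (Fin d) (Fin d) ℂ)) * sampDiag n d g *
    ((Fmat n)ᴴ ⊗ₖ (1 : Matrix (Fin d) (Fin d) ℂ))

/-- The cutting matrix `Kₙ` (with `n = 2k`) selecting the even-indexed entries. -/
def cutK (k : ℕ) : Matrix (Fin k) (Fin (2 * k)) ℂ :=
  Matrix.of fun i j => if (j : ℕ) = 2 * (i : ℕ) then 1 else 0

lemma Fmat_conjTranspose_mul (n : ℕ) : (Fmat n)ᴴ * Fmat n = 1 := by
  ext j l
  have hn : 0 < n := j.pos
  have hn' : (n:ℂ) ≠ 0 := Nat.cast_ne_zero.2 hn.ne'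
  set ζ : ℂ := Complex.exp ((((j:ℕ):ℂ) - ((l:ℕ):ℂ)) * (2 * Real.pi * Complex.I) / n) with hζ
  have hterm : ∀ i : Fin n, (Fmat n)ᴴ j i * Fmat n i l = (n:ℂ)⁻¹ * ζ ^ (i:ℕ) := by
    intro i
    rw [conjTranspose_apply]
    simp only [Fmat, Matrix.of_apply, star_mul', Complex.star_def, ← Complex.exp_conj]
    have hre : (starRingEnd ℂ) (((Real.sqrt n : ℝ) : ℂ)⁻¹) = ((Real.sqrt n : ℝ) : ℂ)⁻¹ := by
      simp
    rw [hre]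
    have hconj : (starRingEnd ℂ) (-Complex.I * ((j:ℕ):ℂ) * ((2 * Real.pi * (i:ℕ) / n : ℝ) : ℂ))
        = Complex.I * ((j:ℕ):ℂ) * ((2 * Real.pi * (i:ℕ) / n : ℝ) : ℂ) := by
      simp only [_root_.map_mul, _root_.map_neg, Complex.conj_I, Complex.conj_ofReal, Complex.conj_natCast]
      ring
    rw [hconj]
    have hsq : ((Real.sqrt n : ℝ) : ℂ)⁻¹ * ((Real.sqrt n : ℝ) : ℂ)⁻¹ = (n:ℂ)⁻¹ := by
      rw [← mul_inv, ← Complex.ofReal_mul, Real.mul_self_sqrt (Nat.cast_nonneg n),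
        Complex.ofReal_natCast]
    have hζi : ζ ^ (i:ℕ) = Complex.exp (((i:ℕ):ℂ) * ((((j:ℕ):ℂ) - ((l:ℕ):ℂ)) * (2 * Real.pi * Complex.I) / n)) := by
      rw [hζ, ← Complex.exp_nat_mul]
    rw [hζi, mul_mul_mul_comm, hsq, ← Complex.exp_add]
    congr 1
    push_cast
    field_simp
    ring
  rw [mul_apply]
  simp only [hterm]
  rw [← Finset.mul_sum, Fin.sum_univ_eq_sum_range (fun i => ζ ^ i)]
  by_cases hjl : j = l
  · subst hjl
    have : ζ = 1 := by rw [hζ]; simp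
    simp [this, one_apply, hn', Finset.sum_const]
  · have h2πI : (2 * (Real.pi:ℂ) * Complex.I) ≠ 0 := by
      simp [Real.pi_ne_zero, Complex.I_ne_zero, Complex.ofReal_ne_zero]
    have hζ1 : ζ ≠ 1 := by
      intro h
      rw [hζ, Complex.exp_eq_one_iff] at h
      obtain ⟨t, ht⟩ := h
      have hc : ((j:ℕ):ℂ) - ((l:ℕ):ℂ) = (t:ℂ) * n := by
        field_simp at ht
        linear_combination ht
      have hz : ((j:ℕ):ℤ) - ((l:ℕ):ℤ) = t * n := by exact_mod_cast hc
      have habs : |((j:ℕ):ℤ) - ((l:ℕ):ℤ)| < (n:ℤ) := by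
        have := j.isLt; have := l.isLt
        rw [abs_lt]; constructor <;> [skip; skip] <;> omega
      have := Int.eq_zero_of_abs_lt_dvd ⟨t, by linarith [hz]⟩ habs
      exact hjl (Fin.ext (by omega))
    have hζn : ζ ^ n = 1 := by
      rw [hζ, ← Complex.exp_nat_mul]
      have : (n:ℂ) * ((((j:ℕ):ℂ) - ((l:ℕ):ℂ)) * (2 * Real.pi * Complex.I) / n)
          = ((((j:ℕ):ℤ) - ((l:ℕ):ℤ) : ℤ):ℂ) * (2 * Real.pi * Complex.I) := by
        push_cast; field_simp
      rw [this, Complex.exp_int_mul_two_pi_mul_I]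
    rw [geom_sum_eq hζ1, hζn, sub_self, zero_div, mul_zero, one_apply_ne hjl]

lemma blockCirc_apply (n d : ℕ) (g : ℝ → Matrix (Fin d) (Fin d) ℂ)
    (i j : Fin n) (a b : Fin d) :
    blockCirc n d g (i,a) (j,b)
      = ∑ l : Fin n, Fmat n i l * star (Fmat n j l) * g (2 * Real.pi * (l:ℕ) / n) a b := by
  simp only [blockCirc, sampDiag, Matrix.mul_apply, Fintype.sum_prod_type, kroneckerMap_apply,
    Matrix.of_apply, Matrix.one_apply, Matrix.conjTranspose_apply, mul_ite, ite_mul,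
    mul_zero, zero_mul, mul_one, one_mul, Finset.sum_ite_irrel, Finset.sum_const_zero,
    Finset.sum_ite_eq, Finset.sum_ite_eq', Finset.mem_univ, if_true]
  apply Finset.sum_congr rfl
  intro l _
  ring

lemma sampDiag_mul (n d : ℕ) (g h : ℝ → Matrix (Fin d) (Fin d) ℂ) :
    sampDiag n d g * sampDiag n d h = sampDiag n d (fun θ => g θ * h θ) := by
  ext ⟨p1, p2⟩ ⟨q1, q2⟩
  simp only [sampDiag, Matrix.mul_apply, Fintype.sum_prod_type, Matrix.of_apply,
    mul_ite, ite_mul, mul_zero, zero_mul, Finset.sum_ite_irrel, Finset.sum_const_zero,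
    Finset.sum_ite_eq, Finset.sum_ite_eq', Finset.mem_univ, if_true]
  by_cases h1 : p1 = q1 <;> simp [h1, Matrix.mul_apply]

lemma sampDiag_conjTranspose (n d : ℕ) (g : ℝ → Matrix (Fin d) (Fin d) ℂ) :
    (sampDiag n d g)ᴴ = sampDiag n d (fun θ => (g θ)ᴴ) := by
  ext ⟨p1, p2⟩ ⟨q1, q2⟩
  simp only [sampDiag, Matrix.conjTranspose_apply, Matrix.of_apply]
  by_cases h1 : p1 = q1
  · subst h1; simp
  · simp [h1, Ne.symm h1]

lemma kron_one_conjTranspose {m n d : ℕ} (A : Matrix (Fin m) (Fin n) ℂ) :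
    (A ⊗ₖ (1 : Matrix (Fin d) (Fin d) ℂ))ᴴ = Aᴴ ⊗ₖ (1 : Matrix (Fin d) (Fin d) ℂ) := by
  ext ⟨i, a⟩ ⟨j, b⟩
  simp only [Matrix.conjTranspose_apply, kroneckerMap_apply, Matrix.one_apply, star_mul']
  by_cases hab : b = a
  · subst hab; simp
  · simp [hab, Ne.symm hab]

lemma blockCirc_mul (n d : ℕ) (g h : ℝ → Matrix (Fin d) (Fin d) ℂ) :
    blockCirc n d g * blockCirc n d h = blockCirc n d (fun θ => g θ * h θ) := by
  unfold blockCirc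
  have key : ((Fmat n)ᴴ ⊗ₖ (1 : Matrix (Fin d) (Fin d) ℂ)) *
      (Fmat n ⊗ₖ (1 : Matrix (Fin d) (Fin d) ℂ)) = 1 := by
    rw [← Matrix.mul_kronecker_mul, Fmat_conjTranspose_mul, one_mul,
      Matrix.one_kronecker_one]
  calc (Fmat n ⊗ₖ (1 : Matrix (Fin d) (Fin d) ℂ)) * sampDiag n d g *
        ((Fmat n)ᴴ ⊗ₖ (1 : Matrix (Fin d) (Fin d) ℂ)) *
        ((Fmat n ⊗ₖ (1 : Matrix (Fin d) (Fin d) ℂ)) * sampDiag n d h *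
        ((Fmat n)ᴴ ⊗ₖ (1 : Matrix (Fin d) (Fin d) ℂ)))
      = (Fmat n ⊗ₖ (1 : Matrix (Fin d) (Fin d) ℂ)) * (sampDiag n d g *
        ((((Fmat n)ᴴ ⊗ₖ (1 : Matrix (Fin d) (Fin d) ℂ)) *
          (Fmat n ⊗ₖ (1 : Matrix (Fin d) (Fin d) ℂ))) * sampDiag n d h)) *
        ((Fmat n)ᴴ ⊗ₖ (1 : Matrix (Fin d) (Fin d) ℂ)) := by
        simp only [Matrix.mul_assoc]
    _ = _ := by rw [key, one_mul, sampDiag_mul]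

lemma blockCirc_conjTranspose (n d : ℕ) (g : ℝ → Matrix (Fin d) (Fin d) ℂ) :
    (blockCirc n d g)ᴴ = blockCirc n d (fun θ => (g θ)ᴴ) := by
  unfold blockCirc
  rw [Matrix.conjTranspose_mul, Matrix.conjTranspose_mul, kron_one_conjTranspose,
    kron_one_conjTranspose, Matrix.conjTranspose_conjTranspose, sampDiag_conjTranspose,
    Matrix.mul_assoc]

-- the pair-product formula for Fmat entries
lemma Fmat_pair (n : ℕ) (hn : 0 < n) (i j l : Fin n) :
    Fmat n i l * star (Fmat n j l)
      = ((n:ℕ):ℂ)⁻¹ * Complex.exp (((l:ℕ):ℂ) *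
          (Complex.I * 2 * Real.pi * (((j:ℕ):ℂ) - ((i:ℕ):ℂ)) / n)) := by
  have hn' : ((n:ℕ):ℂ) ≠ 0 := Nat.cast_ne_zero.2 hn.ne'
  simp only [Fmat, Matrix.of_apply, star_mul', Complex.star_def, ← Complex.exp_conj]
  have hre : (starRingEnd ℂ) (((Real.sqrt n : ℝ) : ℂ)⁻¹) = ((Real.sqrt n : ℝ) : ℂ)⁻¹ := by
    simp
  have hconj : (starRingEnd ℂ) (-Complex.I * ((l:ℕ):ℂ) * ((2 * Real.pi * (j:ℕ) / n : ℝ) : ℂ))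
      = Complex.I * ((l:ℕ):ℂ) * ((2 * Real.pi * (j:ℕ) / n : ℝ) : ℂ) := by
    simp only [_root_.map_mul, _root_.map_neg, Complex.conj_I, Complex.conj_ofReal,
      Complex.conj_natCast]
    ring
  rw [hre, hconj]
  have hsq : ((Real.sqrt n : ℝ) : ℂ)⁻¹ * ((Real.sqrt n : ℝ) : ℂ)⁻¹ = ((n:ℕ):ℂ)⁻¹ := by
    rw [← mul_inv, ← Complex.ofReal_mul, Real.mul_self_sqrt (Nat.cast_nonneg n),
      Complex.ofReal_natCast]
  rw [mul_mul_mul_comm, hsq, ← Complex.exp_add]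
  congr 1
  push_cast
  ring

lemma cut_mul_apply {k d : ℕ} (M : Matrix (Fin (2*k) × Fin d) (Fin (2*k) × Fin d) ℂ)
    (i j : Fin k) (a b : Fin d) :
    ((cutK k ⊗ₖ (1 : Matrix (Fin d) (Fin d) ℂ)) * M *
      ((cutK k)ᵀ ⊗ₖ (1 : Matrix (Fin d) (Fin d) ℂ))) (i,a) (j,b)
      = M (⟨2*(i:ℕ), by omega⟩, a) (⟨2*(j:ℕ), by omega⟩, b) := by
  have hi : ∀ p1 : Fin (2*k), ((p1:ℕ) = 2*(i:ℕ)) = (p1 = ⟨2*(i:ℕ), by omega⟩) := by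
    intro p1; rw [eq_iff_iff, Fin.ext_iff]
  have hj : ∀ p1 : Fin (2*k), ((p1:ℕ) = 2*(j:ℕ)) = (p1 = ⟨2*(j:ℕ), by omega⟩) := by
    intro p1; rw [eq_iff_iff, Fin.ext_iff]
  simp only [Matrix.mul_apply, Fintype.sum_prod_type, kroneckerMap_apply, cutK,
    Matrix.of_apply, Matrix.transpose_apply, Matrix.one_apply, hi, hj, mul_ite, ite_mul,
    mul_zero, zero_mul, mul_one, one_mul, Finset.sum_ite_irrel, Finset.sum_const_zero,
    Finset.sum_ite_eq, Finset.sum_ite_eq', Finset.mem_univ, if_true]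

lemma cut_blockCirc {k d : ℕ} (hk : 0 < k) (g : ℝ → Matrix (Fin d) (Fin d) ℂ) :
    (cutK k ⊗ₖ (1 : Matrix (Fin d) (Fin d) ℂ)) * blockCirc (2*k) d g *
      ((cutK k)ᵀ ⊗ₖ (1 : Matrix (Fin d) (Fin d) ℂ))
      = blockCirc k d (fun θ => (1/2 : ℂ) • (g (θ/2) + g (θ/2 + Real.pi))) := by
  have hk' : ((k:ℕ):ℂ) ≠ 0 := Nat.cast_ne_zero.2 hk.ne'
  have hkR : ((k:ℕ):ℝ) ≠ 0 := Nat.cast_ne_zero.2 hk.ne'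
  ext ⟨i, a⟩ ⟨j, b⟩
  rw [cut_mul_apply, blockCirc_apply, blockCirc_apply]
  set μ : ℂ := Complex.I * 2 * Real.pi * (((2*(j:ℕ):ℕ):ℂ) - ((2*(i:ℕ):ℕ):ℂ)) / (2*k) with hμ
  set ν : ℂ := Complex.I * 2 * Real.pi * (((j:ℕ):ℂ) - ((i:ℕ):ℂ)) / k with hν
  have hμν : μ = ν := by rw [hμ, hν]; push_cast; field_simp
  have hL : ∀ l : Fin (2*k), Fmat (2*k) ⟨2*(i:ℕ), by omega⟩ l *
      star (Fmat (2*k) ⟨2*(j:ℕ), by omega⟩ l)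
      = ((2*k:ℕ):ℂ)⁻¹ * Complex.exp (((l:ℕ):ℂ) * ν) := by
    intro l
    rw [Fmat_pair (2*k) (by omega) ⟨2*(i:ℕ), by omega⟩ ⟨2*(j:ℕ), by omega⟩ l]
    congr 2
    rw [hν]
    push_cast
    field_simp
  have hR : ∀ m : Fin k, Fmat k i m * star (Fmat k j m)
      = ((k:ℕ):ℂ)⁻¹ * Complex.exp (((m:ℕ):ℂ) * ν) := by
    intro m
    rw [Fmat_pair k hk i j m, hν]
  simp only [hL, hR]
  rw [Fin.sum_univ_eq_sum_range (fun l =>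
    ((2*k:ℕ):ℂ)⁻¹ * Complex.exp ((l:ℂ) * ν) * g (2 * Real.pi * l / ((2*k:ℕ):ℝ)) a b),
    Fin.sum_univ_eq_sum_range (fun m =>
    ((k:ℕ):ℂ)⁻¹ * Complex.exp ((m:ℂ) * ν) *
      ((1/2 : ℂ) • (g (2 * Real.pi * m / ((k:ℕ):ℝ) / 2) +
        g (2 * Real.pi * m / ((k:ℕ):ℝ) / 2 + Real.pi))) a b),
    show Finset.range (2*k) = Finset.range (k+k) from by rw [two_mul],
    Finset.sum_range_add]
  have hexpk : Complex.exp (((k:ℕ):ℂ) * ν) = 1 := by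
    have hkν : ((k:ℕ):ℂ) * ν = ((((j:ℕ):ℤ) - ((i:ℕ):ℤ) : ℤ):ℂ) * (2 * Real.pi * Complex.I) := by
      rw [hν]; push_cast; field_simp
    rw [hkν, Complex.exp_int_mul_two_pi_mul_I]
  have key : ∀ m, m ∈ Finset.range k →
      ((2*k:ℕ):ℂ)⁻¹ * Complex.exp ((m:ℂ) * ν) * g (2 * Real.pi * m / ((2*k:ℕ):ℝ)) a b
      + ((2*k:ℕ):ℂ)⁻¹ * Complex.exp (((k+m:ℕ):ℂ) * ν) *
          g (2 * Real.pi * (k+m:ℕ) / ((2*k:ℕ):ℝ)) a b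
      = ((k:ℕ):ℂ)⁻¹ * Complex.exp ((m:ℂ) * ν) *
        ((1/2 : ℂ) • (g (2 * Real.pi * m / ((k:ℕ):ℝ) / 2) +
          g (2 * Real.pi * m / ((k:ℕ):ℝ) / 2 + Real.pi))) a b := by
    intro m _
    have harg1 : (2 * Real.pi * m / ((2*k:ℕ):ℝ)) = 2 * Real.pi * m / ((k:ℕ):ℝ) / 2 := by
      rw [div_div]; push_cast; ring_nf
    have harg2 : (2 * Real.pi * ((k+m:ℕ):ℝ) / ((2*k:ℕ):ℝ))
        = 2 * Real.pi * m / ((k:ℕ):ℝ) / 2 + Real.pi := by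
      push_cast
      field_simp
      ring
    have hexp2 : Complex.exp (((k+m:ℕ):ℂ) * ν) = Complex.exp ((m:ℂ) * ν) := by
      push_cast
      rw [add_mul, Complex.exp_add, hexpk, one_mul]
    rw [harg1, harg2, hexp2, Matrix.smul_apply, Matrix.add_apply, smul_eq_mul]
    push_cast
    field_simp
  rw [← Finset.sum_add_distrib]
  apply Finset.sum_congr rfl
  intro m hm
  rw [← key m hm]


/-- with `pₙᵏ = 𝒜ₙ(p)(Kₙᵀ ⊗ I_d)` and `n = 2k`, the coarse matrix
`(pₙᵏ)ᴴ 𝒜ₙ(f) pₙᵏ` equals `𝒜_k(f̂)` with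
`f̂(θ) = ½(p(θ/2)ᴴ f(θ/2) p(θ/2) + p(θ/2+π)ᴴ f(θ/2+π) p(θ/2+π))`;
moreover, if `f(θ) ⪰ 0` for all `θ` then `f̂(θ) ⪰ 0` for all `θ`. -/
theorem stmt_11 {d k : ℕ} (hk : 0 < k)
    (f p : ℝ → Matrix (Fin d) (Fin d) ℂ)
    (fhat : ℝ → Matrix (Fin d) (Fin d) ℂ)
    (hfhat : ∀ θ : ℝ, fhat θ = (1 / 2 : ℂ) •
      ((p (θ / 2))ᴴ * f (θ / 2) * p (θ / 2) +
        (p (θ / 2 + Real.pi))ᴴ * f (θ / 2 + Real.pi) * p (θ / 2 + Real.pi)))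
    (P : Matrix (Fin (2 * k) × Fin d) (Fin k × Fin d) ℂ)
    (hP : P = blockCirc (2 * k) d p *
      ((cutK k)ᵀ ⊗ₖ (1 : Matrix (Fin d) (Fin d) ℂ))) :
    Pᴴ * blockCirc (2 * k) d f * P = blockCirc k d fhat ∧
    ((∀ θ : ℝ, (f θ).PosSemidef) → ∀ θ : ℝ, (fhat θ).PosSemidef) := by
  have hKT : ((cutK k)ᵀ)ᴴ = cutK k := by
    ext i j
    simp [cutK, Matrix.conjTranspose_apply, Matrix.transpose_apply, apply_ite (star : ℂ → ℂ)]
  have hPH : Pᴴ = (cutK k ⊗ₖ (1 : Matrix (Fin d) (Fin d) ℂ)) *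
      blockCirc (2*k) d (fun θ => (p θ)ᴴ) := by
    rw [hP, Matrix.conjTranspose_mul, kron_one_conjTranspose, hKT, blockCirc_conjTranspose]
  constructor
  · rw [hPH, hP]
    have hassoc : (cutK k ⊗ₖ (1 : Matrix (Fin d) (Fin d) ℂ)) *
          blockCirc (2*k) d (fun θ => (p θ)ᴴ) * blockCirc (2*k) d f *
          (blockCirc (2*k) d p * ((cutK k)ᵀ ⊗ₖ (1 : Matrix (Fin d) (Fin d) ℂ)))
        = (cutK k ⊗ₖ (1 : Matrix (Fin d) (Fin d) ℂ)) *
          (blockCirc (2*k) d (fun θ => (p θ)ᴴ) * blockCirc (2*k) d f *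
            blockCirc (2*k) d p) * ((cutK k)ᵀ ⊗ₖ (1 : Matrix (Fin d) (Fin d) ℂ)) := by
      simp only [Matrix.mul_assoc]
    rw [hassoc, blockCirc_mul, blockCirc_mul, cut_blockCirc hk]
    refine congrArg (blockCirc k d) (funext fun θ => ?_)
    rw [hfhat θ]
  · intro hf θ
    rw [hfhat θ]
    have h1 : ((p (θ/2))ᴴ * f (θ/2) * p (θ/2)).PosSemidef :=
      (hf (θ/2)).conjTranspose_mul_mul_same (p (θ/2))
    have h2 : ((p (θ/2 + Real.pi))ᴴ * f (θ/2 + Real.pi) * p (θ/2 + Real.pi)).PosSemidef :=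
      (hf (θ/2 + Real.pi)).conjTranspose_mul_mul_same (p (θ/2 + Real.pi))
    have hadd := h1.add h2
    set M := (p (θ/2))ᴴ * f (θ/2) * p (θ/2) +
      (p (θ/2 + Real.pi))ᴴ * f (θ/2 + Real.pi) * p (θ/2 + Real.pi)
    have hs : star (1/2 : ℂ) = (1/2 : ℂ) := by norm_num
    constructor
    · show ((1/2 : ℂ) • M)ᴴ = (1/2 : ℂ) • M
      rw [Matrix.conjTranspose_smul, hs, hadd.1]
    · intro x
      have hx : (x.sum fun i xi => x.sum fun j xj => star xi * ((1/2 : ℂ) • M) i j * xj)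
          = (1/2 : ℂ) * x.sum fun i xi => x.sum fun j xj => star xi * M i j * xj := by
        simp only [Finsupp.sum, Finset.mul_sum, Matrix.smul_apply, smul_eq_mul]
        refine Finset.sum_congr rfl fun _ _ => Finset.sum_congr rfl fun _ _ => ?_
        ring
      rw [hx]
      exact mul_nonneg (by norm_num [Complex.le_def]) (hadd.2 x)
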